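/- Let M be a positive integer, let G be an M×M complex matrix, and let R̃ be the 2M×2M skew-symmetric matrix [[0, G], [−G^T, 0]]. For S ⊆ {1,…,2M}, write O = S ∩ {1,…,M} and E = {s − M : s ∈ S, s > M}. If |O| = |E|, then |det R̃[S,S]| = |det G[O,E]|^2 (equivalently, the absolute value of the Pfaffian of R̃[S,S] equals |det G[O,E]|). If |O| ≠ |E|, then det R̃[S,S] = 0. -/

import Mathlib

open scoped BigOperators Matrix

/-- The square submatrix of `A` with rows indexed by `I` and columns indexed by `J`
(both in increasing order), as a determinant; it is `0` if `I.card ≠ J.card`. -/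
noncomputable def subdetC {N : ℕ} (A : Matrix (Fin N) (Fin N) ℂ) (I J : Finset (Fin N)) : ℂ :=
  if h : J.card = I.card then
    Matrix.det (Matrix.of fun a b : Fin I.card =>
      A (I.orderEmbOfFin rfl a) (J.orderEmbOfFin h b))
  else 0

/-- The canonical identification `Fin M ⊕ Fin M ≃ Fin (2M)` sending the first
summand to `{1,…,M}` and the second to `{M+1,…,2M}`. -/
def halfEquiv (M : ℕ) : Fin M ⊕ Fin M ≃ Fin (2 * M) :=
  finSumFinEquiv.trans (finCongr (two_mul M).symm)

/-- The `2M × 2M` skew-symmetric block matrix `R̃ = [[0, G], [-Gᵀ, 0]]`. -/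
def checkerBlock {M : ℕ} (G : Matrix (Fin M) (Fin M) ℂ) :
    Matrix (Fin (2 * M)) (Fin (2 * M)) ℂ :=
  Matrix.reindex (halfEquiv M) (halfEquiv M) (Matrix.fromBlocks 0 G (-Gᵀ) 0)

/-- `O = S ∩ {1,…,M}`, viewed inside `Fin M`. -/
def firstHalf (M : ℕ) (S : Finset (Fin (2 * M))) : Finset (Fin M) :=
  Finset.univ.filter fun i => halfEquiv M (Sum.inl i) ∈ S

/-- `E = {s - M : s ∈ S, s > M}`, viewed inside `Fin M`. -/
def secondHalf (M : ℕ) (S : Finset (Fin (2 * M))) : Finset (Fin M) :=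
  Finset.univ.filter fun i => halfEquiv M (Sum.inr i) ∈ S

lemma halfEquiv_inl_val (M : ℕ) (i : Fin M) : ((halfEquiv M (Sum.inl i)) : ℕ) = i := rfl

lemma halfEquiv_inr_val (M : ℕ) (j : Fin M) : ((halfEquiv M (Sum.inr j)) : ℕ) = M + j := rfl

lemma mem_firstHalf {M : ℕ} {S : Finset (Fin (2 * M))} {i : Fin M} :
    i ∈ firstHalf M S ↔ halfEquiv M (Sum.inl i) ∈ S := by simp [firstHalf]

lemma mem_secondHalf {M : ℕ} {S : Finset (Fin (2 * M))} {j : Fin M} :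
    j ∈ secondHalf M S ↔ halfEquiv M (Sum.inr j) ∈ S := by simp [secondHalf]

lemma subdetC_of_card_eq {N : ℕ} (A : Matrix (Fin N) (Fin N) ℂ) (I J : Finset (Fin N))
    (h : J.card = I.card) :
    subdetC A I J = Matrix.det (Matrix.of fun a b : Fin I.card =>
      A (I.orderEmbOfFin rfl a) (J.orderEmbOfFin h b)) := by
  rw [subdetC, dif_pos h]

lemma card_split (M : ℕ) (S : Finset (Fin (2 * M))) :
    S.card = (firstHalf M S).card + (secondHalf M S).card := by
  classical
  have hS : S = (((firstHalf M S).map ⟨Sum.inl, Sum.inl_injective⟩ ∪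
      (secondHalf M S).map ⟨Sum.inr, Sum.inr_injective⟩).map (halfEquiv M).toEmbedding) := by
    ext x
    simp only [Finset.mem_map, Finset.mem_union, firstHalf, secondHalf, Finset.mem_filter,
      Finset.mem_univ, true_and, Function.Embedding.coeFn_mk, Equiv.coe_toEmbedding]
    constructor
    · intro hx
      rcases h : (halfEquiv M).symm x with i | j
      · have hx2 : x = halfEquiv M (Sum.inl i) := by rw [← h, Equiv.apply_symm_apply]
        exact ⟨Sum.inl i, Or.inl ⟨i, by rw [← hx2]; exact hx, rfl⟩, hx2.symm⟩
      · have hx2 : x = halfEquiv M (Sum.inr j) := by rw [← h, Equiv.apply_symm_apply]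
        exact ⟨Sum.inr j, Or.inr ⟨j, by rw [← hx2]; exact hx, rfl⟩, hx2.symm⟩
    · rintro ⟨y, (⟨i, hi, rfl⟩ | ⟨j, hj, rfl⟩), rfl⟩
      · exact hi
      · exact hj
  conv_lhs => rw [hS]
  rw [Finset.card_map, Finset.card_union_of_disjoint, Finset.card_map, Finset.card_map]
  simp [Finset.disjoint_left]

lemma subdetC_checkerBlock (M : ℕ) (G : Matrix (Fin M) (Fin M) ℂ) (S : Finset (Fin (2 * M)))
    (m : ℕ) (hm : (secondHalf M S).card = m) :
    subdetC (checkerBlock G) S S =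
      (Matrix.fromBlocks 0
        (G.submatrix ((firstHalf M S).orderEmbOfFin rfl) ((secondHalf M S).orderEmbOfFin hm))
        (-(G.submatrix ((firstHalf M S).orderEmbOfFin rfl)
            ((secondHalf M S).orderEmbOfFin hm))ᵀ) 0).det := by
  classical
  set k := (firstHalf M S).card with hk
  have hn : S.card = k + m := by rw [card_split M S, hm]
  set gO := (firstHalf M S).orderEmbOfFin (rfl : (firstHalf M S).card = k) with hgO
  set gE := (secondHalf M S).orderEmbOfFin hm with hgE
  set e : Fin S.card ≃ (Fin k ⊕ Fin m) := (finCongr hn).trans finSumFinEquiv.symm with he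
  set F : Fin S.card → Fin (2 * M) := fun a => halfEquiv M (Sum.map gO gE (e a)) with hF
  have hvalL : ∀ (a : Fin S.card) (i : Fin k), e a = Sum.inl i → (a : ℕ) = i := by
    intro a i h
    have ha : a = e.symm (Sum.inl i) := by rw [← h, Equiv.symm_apply_apply]
    rw [ha]
    simp [he]
  have hvalR : ∀ (a : Fin S.card) (j : Fin m), e a = Sum.inr j → (a : ℕ) = k + j := by
    intro a j h
    have ha : a = e.symm (Sum.inr j) := by rw [← h, Equiv.symm_apply_apply]
    rw [ha]
    simp [he]
  have hFmem : ∀ a, F a ∈ S := by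
    intro a
    rcases h : e a with i | j
    · have h1 : gO i ∈ firstHalf M S := Finset.orderEmbOfFin_mem _ rfl i
      rw [mem_firstHalf] at h1
      simpa [hF, h] using h1
    · have h1 : gE j ∈ secondHalf M S := Finset.orderEmbOfFin_mem _ hm j
      rw [mem_secondHalf] at h1
      simpa [hF, h] using h1
  have hmono : StrictMono F := by
    intro a b hab
    have hab' : (a : ℕ) < (b : ℕ) := hab
    rw [Fin.lt_def]
    rcases ha : e a with i | j <;> rcases hb : e b with i' | j'
    · have h1 := hvalL a i ha
      have h2 := hvalL b i' hb
      have hii : i < i' := by rw [Fin.lt_def]; omega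
      have h3 : ((gO i : Fin M) : ℕ) < ((gO i' : Fin M) : ℕ) := gO.strictMono hii
      simp only [hF, ha, hb, Sum.map_inl, halfEquiv_inl_val]
      exact h3
    · simp only [hF, ha, hb, Sum.map_inl, Sum.map_inr, halfEquiv_inl_val, halfEquiv_inr_val]
      have : ((gO i : Fin M) : ℕ) < M := (gO i).is_lt
      omega
    · exfalso
      have h1 := hvalR a j ha
      have h2 := hvalL b i' hb
      have : (i' : ℕ) < k := i'.is_lt
      omega
    · have h1 := hvalR a j ha
      have h2 := hvalR b j' hb
      have hjj : j < j' := by rw [Fin.lt_def]; omega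
      have h3 : ((gE j : Fin M) : ℕ) < ((gE j' : Fin M) : ℕ) := gE.strictMono hjj
      simp only [hF, ha, hb, Sum.map_inr, halfEquiv_inr_val]
      omega
  have hF2 : F = ⇑(S.orderEmbOfFin rfl) := Finset.orderEmbOfFin_unique rfl hFmem hmono
  rw [subdetC_of_card_eq _ _ _ rfl]
  have key : (Matrix.of fun a b : Fin S.card =>
      checkerBlock G (S.orderEmbOfFin rfl a) (S.orderEmbOfFin rfl b)) =
      (Matrix.fromBlocks 0 (G.submatrix gO gE) (-(G.submatrix gO gE)ᵀ) 0).submatrix e e := by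
    ext a b
    rw [← hF2]
    simp only [Matrix.of_apply, Matrix.submatrix_apply, hF, checkerBlock, Matrix.reindex_apply,
      Matrix.submatrix_apply, Equiv.symm_apply_apply]
    rcases e a with i | j <;> rcases e b with i' | j' <;>
      simp [Matrix.fromBlocks, Matrix.submatrix_apply]
  rw [key, Matrix.det_submatrix_equiv_self]

lemma abs_det_antiBlock {k : ℕ} (B C : Matrix (Fin k) (Fin k) ℂ) :
    ‖(Matrix.fromBlocks 0 B C 0).det‖ =
      ‖B.det‖ * ‖C.det‖ := by
  have h : (Matrix.fromBlocks 0 B C 0) =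
      (Matrix.fromBlocks C 0 0 B).submatrix (Equiv.sumComm (Fin k) (Fin k)) id := by
    ext (i | i) (j | j) <;> rfl
  rw [h, Matrix.det_permute, Matrix.det_fromBlocks_zero₁₂, norm_mul, norm_mul]
  rcases Int.units_eq_one_or (Equiv.Perm.sign (Equiv.sumComm (Fin k) (Fin k) : Equiv.Perm _))
    with h1 | h1 <;> rw [h1] <;> simp [mul_comm]

lemma det_antiBlock_zero {k l : ℕ} (hkl : k ≠ l) (B : Matrix (Fin k) (Fin l) ℂ)
    (C : Matrix (Fin l) (Fin k) ℂ) :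
    (Matrix.fromBlocks 0 B C 0).det = 0 := by
  rw [Matrix.det_apply]
  refine Finset.sum_eq_zero fun σ _ => ?_
  have hex : ∃ i, Matrix.fromBlocks 0 B C 0 (σ i) i = 0 := by
    by_contra hno
    push_neg at hno
    have hl : ∀ x : Fin k, ∃ y : Fin l, σ (Sum.inl x) = Sum.inr y := by
      intro x
      rcases hσ : σ (Sum.inl x) with y | y
      · exfalso; apply hno (Sum.inl x); rw [hσ]; rfl
      · exact ⟨y, rfl⟩
    have hr : ∀ x : Fin l, ∃ y : Fin k, σ (Sum.inr x) = Sum.inl y := by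
      intro x
      rcases hσ : σ (Sum.inr x) with y | y
      · exact ⟨y, rfl⟩
      · exfalso; apply hno (Sum.inr x); rw [hσ]; rfl
    choose f hf using hl
    choose g hg using hr
    have hfinj : Function.Injective f := by
      intro a b hab
      have h1 : σ (Sum.inl a) = σ (Sum.inl b) := by rw [hf a, hf b, hab]
      exact Sum.inl_injective (σ.injective h1)
    have hginj : Function.Injective g := by
      intro a b hab
      have h1 : σ (Sum.inr a) = σ (Sum.inr b) := by rw [hg a, hg b, hab]
      exact Sum.inr_injective (σ.injective h1)
    have h1 : k ≤ l := by simpa using Fintype.card_le_of_injective f hfinj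
    have h2 : l ≤ k := by simpa using Fintype.card_le_of_injective g hginj
    exact hkl (le_antisymm h1 h2)
  obtain ⟨i, hi⟩ := hex
  have h0 : ∏ x, Matrix.fromBlocks 0 B C 0 (σ x) x = 0 :=
    Finset.prod_eq_zero (Finset.mem_univ i) hi
  rw [h0, smul_zero]

/-- **Principal Pfaffian minors of the block matrix `R̃ = [[0, G], [-Gᵀ, 0]]`.**
For `S ⊆ {1,…,2M}` with `O = S ∩ {1,…,M}` and `E = {s-M : s ∈ S, s > M}`:
if `|O| = |E|` then `|det R̃[S,S]| = |det G[O,E]|²` (i.e. the absolute value of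
the Pfaffian of `R̃[S,S]` equals `|det G[O,E]|`), while if `|O| ≠ |E|` then
`det R̃[S,S] = 0`. -/
theorem checkerBlock_pfaffian_minors (M : ℕ) (hM : 0 < M)
    (G : Matrix (Fin M) (Fin M) ℂ) (S : Finset (Fin (2 * M))) :
    ((firstHalf M S).card = (secondHalf M S).card →
      ‖subdetC (checkerBlock G) S S‖ =
        ‖subdetC G (firstHalf M S) (secondHalf M S)‖ ^ 2) ∧
    ((firstHalf M S).card ≠ (secondHalf M S).card →
      subdetC (checkerBlock G) S S = 0) := by
  constructor
  · intro hcard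
    rw [subdetC_checkerBlock M G S (firstHalf M S).card hcard.symm,
      subdetC_of_card_eq G _ _ hcard.symm]
    set B := G.submatrix ((firstHalf M S).orderEmbOfFin rfl)
      ((secondHalf M S).orderEmbOfFin hcard.symm) with hB
    have hBeq : (Matrix.of fun a b : Fin (firstHalf M S).card =>
        G ((firstHalf M S).orderEmbOfFin rfl a) ((secondHalf M S).orderEmbOfFin hcard.symm b))
        = B := rfl
    rw [hBeq, abs_det_antiBlock]
    have : ‖(-Bᵀ).det‖ = ‖B.det‖ := by
      rw [Matrix.det_neg, Matrix.det_transpose, norm_mul]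
      simp
    rw [this, sq]
  · intro hcard
    rw [subdetC_checkerBlock M G S (secondHalf M S).card rfl]
    exact det_antiBlock_zero hcard _ _
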